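/- arXiv:0905.4798 — 5 statements merged into one kernel-verified Lean document; each statement's English description precedes it below -/
import Mathlib

section
/- The subgroup of SL₂(ℤ) generated by squares of elements of Γ(2) equals Γ(4). -/
open Matrix CongruenceSubgroup
open scoped MatrixGroups

namespace GammaSq


lemma reduce_pos (x y : ℤ) (hy : 0 < y) (hpar : ¬ (2 ∣ x + y)) :
    ∃ k : ℤ, (x + 2 * k * y).natAbs < y.natAbs := by
  obtain ⟨q, r, h3, h1, h2⟩ : ∃ q r : ℤ, x = 2*y*q + r ∧ 0 ≤ r ∧ r < 2*y :=
    ⟨x / (2*y), x % (2*y), by rw [Int.mul_ediv_add_emod],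
      Int.emod_nonneg x (by linarith : (0:ℤ) < 2*y).ne',
      Int.emod_lt_of_pos x (by linarith)⟩
  rcases lt_or_ge r y with h | h
  · refine ⟨-q, ?_⟩
    have hk : x + 2 * (-q) * y = r := by linear_combination h3
    rw [hk]; omega
  · refine ⟨-q - 1, ?_⟩
    have hk : x + 2 * (-q - 1) * y = r - 2*y := by linear_combination h3
    rw [hk]
    have hne : r ≠ y := by
      intro he
      exact hpar ⟨y*q + y, by rw [h3, he]; ring⟩
    omega

lemma reduce_step (x y : ℤ) (hy : y ≠ 0) (hpar : ¬ (2 ∣ x + y)) :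
    ∃ k : ℤ, (x + 2 * k * y).natAbs < y.natAbs := by
  rcases hy.lt_or_gt with h | h
  · obtain ⟨k, hk⟩ := reduce_pos x (-y) (by linarith) (by intro d; exact hpar (by omega))
    refine ⟨-k, ?_⟩
    have he : x + 2 * (-k) * y = x + 2 * k * -y := by ring
    rw [he]
    simpa [Int.natAbs_neg] using hk
  · exact reduce_pos x y h hpar


def Lm : SL(2, ℤ) := ⟨!![1,0;2,1], by norm_num [Matrix.det_fin_two_of]⟩

def Tm : SL(2, ℤ) := ModularGroup.T

lemma coe_L_zpow (n : ℤ) : (↑(Lm ^ n) : Matrix (Fin 2) (Fin 2) ℤ) = !![1,0;2*n,1] := by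
  induction n using Int.induction_on with
  | zero => rw [zpow_zero]; ext i j; fin_cases i <;> fin_cases j <;> rfl
  | succ k ih =>
      rw [_root_.zpow_add, zpow_one, Matrix.SpecialLinearGroup.coe_mul, ih]
      rw [show (Lm : Matrix (Fin 2) (Fin 2) ℤ) = !![1,0;2,1] from rfl]
      ext i j; fin_cases i <;> fin_cases j <;>
        (simp [Matrix.mul_apply, Fin.sum_univ_two]; try ring)
  | pred k ih =>
      rw [show (-(k:ℤ) - 1) = (-(k:ℤ)) + (-1) by ring, _root_.zpow_add, _root_.zpow_neg_one,
        Matrix.SpecialLinearGroup.coe_mul, ih]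
      have h2 : (↑(Lm⁻¹) : Matrix (Fin 2) (Fin 2) ℤ) = !![1,0;-2,1] := by
        rw [Matrix.SpecialLinearGroup.coe_inv,
          show (Lm : Matrix (Fin 2) (Fin 2) ℤ) = !![1,0;2,1] from rfl]
        ext i j; fin_cases i <;> fin_cases j <;> simp [Matrix.adjugate_fin_two]
      rw [h2]
      ext i j; fin_cases i <;> fin_cases j <;>
        (simp [Matrix.mul_apply, Fin.sum_univ_two]; try ring)

lemma coe_T_zpow (n : ℤ) : (↑(Tm ^ n) : Matrix (Fin 2) (Fin 2) ℤ) = !![1,n;0,1] :=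
  ModularGroup.coe_T_zpow n

/-- membership in Gamma N via divisibility of integer entries -/
lemma gamma_mem_dvd {N : ℕ} {A : SL(2, ℤ)} :
    A ∈ Gamma N ↔ (N:ℤ) ∣ (A : Matrix (Fin 2) (Fin 2) ℤ) 0 0 - 1 ∧
      (N:ℤ) ∣ (A : Matrix (Fin 2) (Fin 2) ℤ) 0 1 ∧
      (N:ℤ) ∣ (A : Matrix (Fin 2) (Fin 2) ℤ) 1 0 ∧
      (N:ℤ) ∣ (A : Matrix (Fin 2) (Fin 2) ℤ) 1 1 - 1 := by
  rw [Gamma_mem]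
  have h : ∀ x : ℤ, ((x : ZMod N) = 1) ↔ (N:ℤ) ∣ x - 1 := by
    intro x
    rw [← sub_eq_zero, show ((x : ZMod N) - 1) = ((x - 1 : ℤ) : ZMod N) by push_cast; ring,
      ZMod.intCast_zmod_eq_zero_iff_dvd]
  simp only [h, ZMod.intCast_zmod_eq_zero_iff_dvd]

end GammaSq

namespace GammaSq
open Subgroup

def Hgen : Subgroup SL(2, ℤ) := Subgroup.closure {(-1 : SL(2, ℤ)), Tm^2, Lm}

lemma neg_one_mem_H : (-1 : SL(2,ℤ)) ∈ Hgen := Subgroup.subset_closure (by simp)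

lemma T_zpow_mem_H (k : ℤ) : Tm ^ (2*k) ∈ Hgen := by
  have h : Tm ^ (2*k) = (Tm^(2:ℕ)) ^ k := by
    rw [← zpow_natCast Tm 2, ← _root_.zpow_mul]; norm_num
  rw [h]
  exact Subgroup.zpow_mem _ (Subgroup.subset_closure (by simp)) k

lemma L_zpow_mem_H (k : ℤ) : Lm ^ k ∈ Hgen :=
  Subgroup.zpow_mem _ (Subgroup.subset_closure (by simp)) k

lemma Lm_mem_gamma2 : Lm ∈ Gamma 2 := by
  rw [gamma_mem_dvd]
  norm_num [show (Lm : Matrix (Fin 2) (Fin 2) ℤ) = !![1,0;2,1] from rfl]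

lemma T_zpow_mem_gamma2 (k : ℤ) : Tm ^ (2*k) ∈ Gamma 2 := by
  rw [gamma_mem_dvd]
  norm_num [coe_T_zpow]

end GammaSq

namespace GammaSq

lemma gamma_two_gen_aux : ∀ (n : ℕ) (A : SL(2,ℤ)), A ∈ Gamma 2 →
    ((A : Matrix (Fin 2) (Fin 2) ℤ) 1 0).natAbs = n → A ∈ Hgen := by
  intro n
  induction n using Nat.strong_induction_on with
  | _ n ih =>
    intro A hA hn
    obtain ⟨hda, hdb, hdc, hdd⟩ := gamma_mem_dvd.mp hA
    set a := (A : Matrix (Fin 2) (Fin 2) ℤ) 0 0 with ha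
    set b := (A : Matrix (Fin 2) (Fin 2) ℤ) 0 1 with hb
    set c := (A : Matrix (Fin 2) (Fin 2) ℤ) 1 0 with hc
    set d := (A : Matrix (Fin 2) (Fin 2) ℤ) 1 1 with hd
    have hA1 : (A : Matrix (Fin 2) (Fin 2) ℤ) = !![a,b;c,d] := by
      ext i j; fin_cases i <;> fin_cases j <;> rfl
    have hdet : a * d - b * c = 1 := by
      have h2 := A.2
      rw [Matrix.det_fin_two] at h2
      exact h2
    by_cases hc0 : c = 0
    · have had : a * d = 1 := by rw [hc0] at hdet; linarith
      obtain ⟨k, hk⟩ := hdb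
      rcases Int.mul_eq_one_iff_eq_one_or_neg_one.mp had with ⟨ha1, hd1⟩ | ⟨ha1, hd1⟩
      · have hAeq : A = Tm ^ (2*k) := by
          apply Subtype.ext
          rw [coe_T_zpow, hA1, ha1, hd1, hc0, hk]
          norm_num
        rw [hAeq]; exact T_zpow_mem_H k
      · have hAeq : A = (-1) * Tm ^ (2*(-k)) := by
          apply Subtype.ext
          rw [Matrix.SpecialLinearGroup.coe_mul, coe_T_zpow, hA1, ha1, hd1, hc0, hk]
          norm_num
        rw [hAeq]
        exact Subgroup.mul_mem _ neg_one_mem_H (T_zpow_mem_H (-k))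
    · obtain ⟨k, hk⟩ := reduce_step a c hc0 (by omega)
      set B := Tm ^ (2*k) * A with hBdef
      have hB : (B : Matrix (Fin 2) (Fin 2) ℤ) = !![a + 2*k*c, b + 2*k*d; c, d] := by
        rw [hBdef, Matrix.SpecialLinearGroup.coe_mul, coe_T_zpow, hA1]
        ext i j; fin_cases i <;> fin_cases j <;>
          (simp [Matrix.mul_apply, Fin.sum_univ_two]; try ring)
      have ha'odd : ¬ (2 ∣ a + 2*k*c) := by
        obtain ⟨v, hv⟩ : ∃ v, a + 2*k*c = a + 2*v := ⟨k*c, by ring⟩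
        omega
      have ha'0 : a + 2*k*c ≠ 0 := by omega
      obtain ⟨k', hk'⟩ := reduce_step c (a + 2*k*c) ha'0 (by omega)
      set C := Lm ^ k' * B with hCdef
      have hC : (C : Matrix (Fin 2) (Fin 2) ℤ) =
          !![a + 2*k*c, b + 2*k*d; c + 2*k'*(a + 2*k*c), d + 2*k'*(b + 2*k*d)] := by
        rw [hCdef, Matrix.SpecialLinearGroup.coe_mul, coe_L_zpow, hB]
        ext i j; fin_cases i <;> fin_cases j <;>
          (simp [Matrix.mul_apply, Fin.sum_univ_two]; try ring)
      have hCmem : C ∈ Gamma 2 := by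
        exact Subgroup.mul_mem _ (Subgroup.zpow_mem _ Lm_mem_gamma2 k')
          (Subgroup.mul_mem _ (T_zpow_mem_gamma2 k) hA)
      have hCH : C ∈ Hgen := by
        apply ih ((c + 2*k'*(a + 2*k*c)).natAbs) _ C hCmem
        · rw [hC]; rfl
        · calc (c + 2*k'*(a + 2*k*c)).natAbs < (a + 2*k*c).natAbs := hk'
            _ < c.natAbs := hk
            _ = n := hn
      have hAeq : A = (Tm ^ (2*k))⁻¹ * ((Lm ^ k')⁻¹ * C) := by
        rw [hCdef, hBdef]; group
      rw [hAeq]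
      exact Subgroup.mul_mem _ (Subgroup.inv_mem _ (T_zpow_mem_H k))
        (Subgroup.mul_mem _ (Subgroup.inv_mem _ (L_zpow_mem_H k')) hCH)

lemma gamma_two_gen {A : SL(2,ℤ)} (hA : A ∈ Gamma 2) : A ∈ Hgen :=
  gamma_two_gen_aux _ A hA rfl

end GammaSq

namespace GammaSq

def Ssub : Subgroup SL(2, ℤ) := Subgroup.closure {x : SL(2, ℤ) | ∃ a ∈ Gamma 2, x = a ^ 2}

lemma sq_mem_gamma4 {a : SL(2,ℤ)} (h : a ∈ Gamma 2) : a^2 ∈ Gamma 4 := by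
  obtain ⟨h1, h2, h3, h4⟩ := gamma_mem_dvd.mp h
  obtain ⟨p, hp⟩ := h1
  obtain ⟨q, hq⟩ := h2
  obtain ⟨r, hr⟩ := h3
  obtain ⟨s, hs⟩ := h4
  rw [gamma_mem_dvd]
  have e00 : (a : Matrix (Fin 2) (Fin 2) ℤ) 0 0 = 1 + 2*p := by omega
  have e01 : (a : Matrix (Fin 2) (Fin 2) ℤ) 0 1 = 2*q := by omega
  have e10 : (a : Matrix (Fin 2) (Fin 2) ℤ) 1 0 = 2*r := by omega
  have e11 : (a : Matrix (Fin 2) (Fin 2) ℤ) 1 1 = 1 + 2*s := by omega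
  have hsq : ((a^2 : SL(2,ℤ)) : Matrix (Fin 2) (Fin 2) ℤ) =
      (a : Matrix (Fin 2) (Fin 2) ℤ) * (a : Matrix (Fin 2) (Fin 2) ℤ) := by
    rw [pow_two]; exact Matrix.SpecialLinearGroup.coe_mul a a
  have m00 : ((a^2 : SL(2,ℤ)) : Matrix (Fin 2) (Fin 2) ℤ) 0 0 =
      (1+2*p) * (1+2*p) + (2*q)*(2*r) := by
    rw [hsq, ← e00, ← e01, ← e10]; simp [Matrix.mul_apply, Fin.sum_univ_two]
  have m01 : ((a^2 : SL(2,ℤ)) : Matrix (Fin 2) (Fin 2) ℤ) 0 1 =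
      (1+2*p) * (2*q) + (2*q)*(1+2*s) := by
    rw [hsq, ← e00, ← e01, ← e11]; simp [Matrix.mul_apply, Fin.sum_univ_two]
  have m10 : ((a^2 : SL(2,ℤ)) : Matrix (Fin 2) (Fin 2) ℤ) 1 0 =
      (2*r) * (1+2*p) + (1+2*s)*(2*r) := by
    rw [hsq, ← e00, ← e10, ← e11]; simp [Matrix.mul_apply, Fin.sum_univ_two]
  have m11 : ((a^2 : SL(2,ℤ)) : Matrix (Fin 2) (Fin 2) ℤ) 1 1 =
      (2*r) * (2*q) + (1+2*s)*(1+2*s) := by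
    rw [hsq, ← e01, ← e10, ← e11]; simp [Matrix.mul_apply, Fin.sum_univ_two]
  refine ⟨⟨p + p*p + q*r, ?_⟩, ⟨q + p*q + q*s, ?_⟩, ⟨r + r*p + s*r, ?_⟩, ⟨r*q + s + s*s, ?_⟩⟩ <;>
    [rw [m00]; rw [m01]; rw [m10]; rw [m11]] <;> push_cast <;> ring

lemma Ssub_le_gamma4 : Ssub ≤ Gamma 4 := by
  rw [Ssub, Subgroup.closure_le]
  rintro x ⟨a, ha, rfl⟩
  exact sq_mem_gamma4 ha

instance : Ssub.Normal := by
  constructor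
  intro x hx g
  have hmap : Subgroup.map (MulAut.conj g).toMonoidHom Ssub ≤ Ssub := by
    rw [Ssub, MonoidHom.map_closure, Subgroup.closure_le]
    rintro y ⟨z, ⟨a, ha, rfl⟩, rfl⟩
    refine Subgroup.subset_closure ⟨g * a * g⁻¹, (Gamma_normal 2).conj_mem a ha g, ?_⟩
    simp only [MulEquiv.toMonoidHom_eq_coe, MonoidHom.coe_coe, MulAut.conj_apply]
    rw [pow_two, pow_two]
    group
  exact hmap ⟨x, hx, rfl⟩

end GammaSq

namespace GammaSq


lemma coe_T_sq : (↑(Tm ^ 2) : Matrix (Fin 2) (Fin 2) ℤ) = !![1,2;0,1] := by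
  rw [show Tm ^ 2 = Tm ^ (2:ℤ) from (zpow_natCast Tm 2).symm ▸ by norm_num]
  exact coe_T_zpow 2

lemma T_sq_mem_gamma2 : Tm ^ 2 ∈ Gamma 2 := by
  rw [gamma_mem_dvd, coe_T_sq]; norm_num

lemma neg_one_mem_gamma2 : (-1 : SL(2,ℤ)) ∈ Gamma 2 := by
  rw [gamma_mem_dvd]
  have : ((-1 : SL(2,ℤ)) : Matrix (Fin 2) (Fin 2) ℤ) = -1 := by
    rw [Matrix.SpecialLinearGroup.coe_neg]; simp
  rw [this]
  norm_num [Matrix.one_apply]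

def Qg := SL(2,ℤ) ⧸ Ssub

instance : Group Qg := QuotientGroup.Quotient.group Ssub

def π : SL(2,ℤ) →* Qg := QuotientGroup.mk' Ssub

lemma pi_sq {a : SL(2,ℤ)} (ha : a ∈ Gamma 2) : π (a ^ 2) = 1 :=
  (QuotientGroup.eq_one_iff _).mpr (Subgroup.subset_closure ⟨a, ha, rfl⟩)

def wrd (i j k : Bool) : SL(2,ℤ) :=
  (cond i (-1) 1) * (cond j (Tm^2) 1) * (cond k Lm 1)

lemma sq_one {x : SL(2,ℤ)} (hx : x ∈ Gamma 2) : π x * π x = 1 := by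
  rw [← _root_.map_mul, ← pow_two]; exact pi_sq hx

lemma wrd_mul (i j k i' j' k' : Bool) :
    π (wrd i j k) * π (wrd i' j' k') = π (wrd (xor i i') (xor j j') (xor k k')) := by
  have hαα := sq_one neg_one_mem_gamma2
  have hββ := sq_one T_sq_mem_gamma2
  have hγγ := sq_one Lm_mem_gamma2
  have hβγ := sq_one (Subgroup.mul_mem _ T_sq_mem_gamma2 Lm_mem_gamma2)
  rw [_root_.map_mul] at hβγ
  set α := π (-1) with hα
  set β := π (Tm^2) with hβ
  set γ := π Lm with hγ
  have hβinv : β⁻¹ = β := inv_eq_of_mul_eq_one_right hββ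
  have hγinv : γ⁻¹ = γ := inv_eq_of_mul_eq_one_right hγγ
  have hcomm : γ * β = β * γ := by
    have h1 : (β*γ)⁻¹ = β*γ := inv_eq_of_mul_eq_one_right hβγ
    calc γ * β = γ⁻¹ * β⁻¹ := by rw [hβinv, hγinv]
      _ = (β*γ)⁻¹ := (mul_inv_rev β γ).symm
      _ = β*γ := h1
  have hcommα : ∀ x : SL(2,ℤ), α * π x = π x * α := by
    intro x
    rw [hα, ← _root_.map_mul, ← _root_.map_mul, neg_one_mul, mul_neg_one]
  have hβα : β * α = α * β := (hcommα (Tm^2)).symm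
  have hγα : γ * α = α * γ := (hcommα Lm).symm
  have hcomm' : ∀ x, γ * (β * x) = β * (γ * x) := fun x => by
    rw [← mul_assoc, hcomm, mul_assoc]
  have hβα' : ∀ x, β * (α * x) = α * (β * x) := fun x => by
    rw [← mul_assoc, hβα, mul_assoc]
  have hγα' : ∀ x, γ * (α * x) = α * (γ * x) := fun x => by
    rw [← mul_assoc, hγα, mul_assoc]
  have hαα' : ∀ x, α * (α * x) = x := fun x => by rw [← mul_assoc, hαα, one_mul]
  have hββ' : ∀ x, β * (β * x) = x := fun x => by rw [← mul_assoc, hββ, one_mul]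
  have hγγ' : ∀ x, γ * (γ * x) = x := fun x => by rw [← mul_assoc, hγγ, one_mul]
  rcases i <;> rcases j <;> rcases k <;> rcases i' <;> rcases j' <;> rcases k' <;>
    simp only [wrd, Bool.cond_true, Bool.cond_false, Bool.xor_false, Bool.xor_true,
      Bool.bne_true, Bool.bne_false, Bool.not_true, Bool.not_false,
      mul_one, one_mul, _root_.map_mul, _root_.map_one, ← hα, ← hβ, ← hγ, mul_assoc,
      hcomm, hcomm', hβα, hβα', hγα, hγα', hαα, hαα', hββ, hββ', hγγ, hγγ']

end GammaSq

namespace GammaSq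

lemma wrd_one : wrd false false false = 1 := by simp [wrd]

lemma pi_H {x : SL(2,ℤ)} (hx : x ∈ Hgen) : ∃ i j k : Bool, π x = π (wrd i j k) := by
  induction hx using Subgroup.closure_induction with
  | mem y hy =>
      rcases hy with h | h | h
      · exact ⟨true, false, false, by rw [h]; simp [wrd]⟩
      · exact ⟨false, true, false, by rw [h]; simp [wrd]⟩
      · exact ⟨false, false, true, by rw [h]; simp [wrd]⟩
  | one => exact ⟨false, false, false, by rw [wrd_one]⟩
  | mul x y hx hy ihx ihy =>
      obtain ⟨i, j, k, hx'⟩ := ihx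
      obtain ⟨i', j', k', hy'⟩ := ihy
      exact ⟨_, _, _, by rw [_root_.map_mul, hx', hy', wrd_mul]⟩
  | inv x hx ihx =>
      obtain ⟨i, j, k, hx'⟩ := ihx
      refine ⟨i, j, k, ?_⟩
      rw [map_inv, hx']
      apply inv_eq_of_mul_eq_one_right
      rw [wrd_mul]
      simp [wrd_one]

end GammaSq

namespace GammaSq

lemma coe_Lm : (Lm : Matrix (Fin 2) (Fin 2) ℤ) = !![1,0;2,1] := rfl

lemma wrd_gamma4 {i j k : Bool} (h : wrd i j k ∈ Gamma 4) :
    i = false ∧ j = false ∧ k = false := by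
  rw [gamma_mem_dvd] at h
  rcases i <;> rcases j <;> rcases k <;>
    first
      | exact ⟨rfl, rfl, rfl⟩
      | (exfalso
         simp only [wrd, Bool.cond_true, Bool.cond_false, mul_one, one_mul,
           Matrix.SpecialLinearGroup.coe_mul, Matrix.SpecialLinearGroup.coe_neg,
           coe_T_sq, coe_Lm] at h
         norm_num [Matrix.mul_apply, Fin.sum_univ_two] at h)

lemma gamma4_le_Ssub : Gamma 4 ≤ Ssub := by
  intro A hA4
  have hA2 : A ∈ Gamma 2 := by
    rw [gamma_mem_dvd] at hA4 ⊢
    obtain ⟨h1, h2, h3, h4⟩ := hA4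
    have h24 : ((2:ℕ):ℤ) ∣ ((4:ℕ):ℤ) := by norm_num
    exact ⟨h24.trans h1, h24.trans h2, h24.trans h3, h24.trans h4⟩
  obtain ⟨i, j, k, hπ⟩ := pi_H (gamma_two_gen hA2)
  have hπ' : (QuotientGroup.mk' Ssub) A = (QuotientGroup.mk' Ssub) (wrd i j k) := hπ
  rw [QuotientGroup.mk'_eq_mk'] at hπ'
  obtain ⟨z, hz, haz⟩ := hπ'
  have hw4 : wrd i j k ∈ Gamma 4 := by
    rw [← haz]
    exact Subgroup.mul_mem _ hA4 (Ssub_le_gamma4 hz)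
  obtain ⟨hi, hj, hk⟩ := wrd_gamma4 hw4
  subst hi; subst hj; subst hk
  rw [wrd_one] at haz
  rw [eq_inv_of_mul_eq_one_left haz]
  exact Subgroup.inv_mem _ hz

end GammaSq

/-- The subgroup of SL₂(ℤ) generated by squares of elements of Γ(2) equals Γ(4). -/
theorem gamma_two_squared_eq_gamma_four :
    Subgroup.closure {x : SL(2, ℤ) | ∃ a ∈ Gamma 2, x = a ^ 2} = Gamma 4 :=
  le_antisymm GammaSq.Ssub_le_gamma4 GammaSq.gamma4_le_Ssub
end

section
/- Let Γ̄ be a subgroup of PSL₂(ℤ) that admits a noncongruence lift to SL₂(ℤ). Then every subgroup Ḡ ≤ Γ̄ also admits a noncongruence lift to SL₂(ℤ). -/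
open Matrix CongruenceSubgroup
open scoped MatrixGroups

instance : (Subgroup.zpowers (-1 : SL(2, ℤ))).Normal where
  conj_mem := by
    intro x hx g
    obtain ⟨k, rfl⟩ := hx
    have h : g * (-1 : SL(2, ℤ)) ^ k * g⁻¹ = (-1 : SL(2, ℤ)) ^ k := by
      rw [((Commute.neg_one_left g).zpow_left k).symm.eq, mul_inv_cancel_right]
    rw [h]
    exact Subgroup.zpow_mem _ (Subgroup.mem_zpowers _) k

/-- PSL₂(ℤ) = SL₂(ℤ)/{±I}. -/
abbrev PSL2Z := SL(2, ℤ) ⧸ Subgroup.zpowers (-1 : SL(2, ℤ))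

/-- The canonical projection SL₂(ℤ) → PSL₂(ℤ). -/
def proj : SL(2, ℤ) →* PSL2Z := QuotientGroup.mk' _

/-- A subgroup of SL₂(ℤ) is congruence if it contains Γ(N) for some N ≥ 1. -/
def IsCongruence (Γ : Subgroup SL(2, ℤ)) : Prop := ∃ N : ℕ, 0 < N ∧ Gamma N ≤ Γ

/-- If Γ̄ ≤ PSL₂(ℤ) admits a noncongruence lift, so does every subgroup Ḡ ≤ Γ̄. -/
theorem noncongruence_lift_of_subgroup (Γbar Gbar : Subgroup PSL2Z) (hle : Gbar ≤ Γbar)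
    (h : ∃ Γ : Subgroup SL(2, ℤ), Subgroup.map proj Γ = Γbar ∧ ¬ IsCongruence Γ) :
    ∃ G : Subgroup SL(2, ℤ), Subgroup.map proj G = Gbar ∧ ¬ IsCongruence G := by
  obtain ⟨Γ, hΓ, hnc⟩ := h
  refine ⟨Γ ⊓ Subgroup.comap proj Gbar, ?_, ?_⟩
  · apply le_antisymm
    · rintro x ⟨g, ⟨_, hg2⟩, rfl⟩
      exact hg2
    · intro x hx
      have hxΓ : x ∈ Subgroup.map proj Γ := hΓ ▸ hle hx
      obtain ⟨g, hg, rfl⟩ := hxΓ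
      exact ⟨g, ⟨hg, hx⟩, rfl⟩
  · rintro ⟨N, hN, hle'⟩
    exact hnc ⟨N, hN, hle'.trans inf_le_left⟩
end

section
/- Let p be an odd prime, N = p^r, and u = p^{2r-1}(p-1)/2. Then for every A ∈ Γ₀(N), A^u ≡ ±I mod N. -/
open Matrix CongruenceSubgroup
open scoped MatrixGroups

/-- Reduction of SL₂(ℤ) modulo N. -/
def redMod (N : ℕ) : SL(2, ℤ) →* Matrix.SpecialLinearGroup (Fin 2) (ZMod N) :=
  Matrix.SpecialLinearGroup.map (Int.castRingHom (ZMod N))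

lemma aux_sqrt_one (p : ℕ) (hp : p.Prime) (hodd : Odd p) (r : ℕ) (hr : 1 ≤ r)
    (x : ZMod (p ^ r)) (hx : x ^ 2 = 1) : x = 1 ∨ x = -1 := by
  haveI : NeZero (p ^ r) := ⟨pow_ne_zero _ hp.pos.ne'⟩
  set y : ℤ := (x.val : ℤ) with hy
  have hxy : (y : ZMod (p ^ r)) = x := by
    simp [hy, ZMod.natCast_val, ZMod.cast_id]
  have hdvd : ((p ^ r : ℕ) : ℤ) ∣ (y - 1) * (y + 1) := by
    rw [← ZMod.intCast_zmod_eq_zero_iff_dvd]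
    push_cast
    rw [hxy]
    linear_combination hx
  have hpZ : Prime (p : ℤ) := Nat.prime_iff_prime_int.mp hp
  have hp3 : 3 ≤ p := by
    rcases hp.two_le.lt_or_eq with h | h
    · omega
    · exfalso; rw [← h] at hodd; exact (Nat.not_odd_iff_even.mpr even_two) hodd
  push_cast at hdvd
  by_cases h1 : (p : ℤ) ∣ y - 1
  · left
    have h2 : ¬ (p : ℤ) ∣ y + 1 := by
      intro h2
      have h3 : (p : ℤ) ∣ 2 := by
        have := dvd_sub h2 h1
        simpa using this
      have := Int.le_of_dvd (by norm_num) h3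
      omega
    have hcop : IsCoprime ((p : ℤ) ^ r) (y + 1) :=
      ((hpZ.coprime_iff_not_dvd).mpr h2).pow_left
    have : ((p : ℤ) ^ r) ∣ y - 1 := hcop.dvd_of_dvd_mul_right hdvd
    have : ((y - 1 : ℤ) : ZMod (p ^ r)) = 0 := by
      rw [ZMod.intCast_zmod_eq_zero_iff_dvd]
      exact_mod_cast this
    push_cast at this
    rw [hxy] at this
    linear_combination this
  · right
    have hcop : IsCoprime ((p : ℤ) ^ r) (y - 1) :=
      ((hpZ.coprime_iff_not_dvd).mpr h1).pow_left
    have : ((p : ℤ) ^ r) ∣ y + 1 := hcop.dvd_of_dvd_mul_left hdvd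
    have : ((y + 1 : ℤ) : ZMod (p ^ r)) = 0 := by
      rw [ZMod.intCast_zmod_eq_zero_iff_dvd]
      exact_mod_cast this
    push_cast at this
    rw [hxy] at this
    linear_combination this

lemma aux_unipotent_pow {R : Type*} [CommRing R] (y : R) (n : ℕ) :
    (!![1, y; 0, 1] : Matrix (Fin 2) (Fin 2) R) ^ n = !![1, (n : R) * y; 0, 1] := by
  induction n with
  | zero => simp [Matrix.one_fin_two]
  | succ n ih =>
    rw [pow_succ, ih, Matrix.mul_fin_two]
    congr 1 <;> push_cast <;> ring

lemma aux_tri_pow {R : Type*} [CommRing R] (a b d : R) (n : ℕ) :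
    ∃ c, (!![a, b; 0, d] : Matrix (Fin 2) (Fin 2) R) ^ n = !![a ^ n, c; 0, d ^ n] := by
  induction n with
  | zero => exact ⟨0, by simp [Matrix.one_fin_two]⟩
  | succ n ih =>
    obtain ⟨c, hc⟩ := ih
    refine ⟨a ^ n * b + c * d, ?_⟩
    rw [pow_succ, hc, Matrix.mul_fin_two]
    congr 1 <;> ring

/-- For p an odd prime, N = p^r and u = p^{2r-1}(p-1)/2, every A ∈ Γ₀(N)
satisfies A^u ≡ ±I mod N. -/
theorem pow_u_eq_pm_one_mod_N (p : ℕ) (hp : p.Prime) (hodd : Odd p) (r : ℕ) (hr : 1 ≤ r)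
    (A : SL(2, ℤ)) (hA : A ∈ Gamma0 (p ^ r)) :
    redMod (p ^ r) (A ^ (p ^ (2 * r - 1) * (p - 1) / 2)) = 1 ∨
    redMod (p ^ r) (A ^ (p ^ (2 * r - 1) * (p - 1) / 2)) = -1 := by
  haveI : NeZero (p ^ r) := ⟨pow_ne_zero _ hp.pos.ne'⟩
  obtain ⟨k, hk⟩ := id hodd
  set N := p ^ r with hN
  set B := redMod N A with hB
  set M : Matrix (Fin 2) (Fin 2) (ZMod N) := (B : Matrix (Fin 2) (Fin 2) (ZMod N)) with hM
  set a := M 0 0 with ha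
  set b := M 0 1 with hb
  set d := M 1 1 with hd
  have hc0 : M 1 0 = 0 := by
    have := Gamma0_mem.mp hA
    simpa [hM, hB, redMod] using this
  have hMeta : M = !![a, b; 0, d] := by
    rw [Matrix.eta_fin_two M, hc0]
  have hdet : a * d = 1 := by
    have := B.property
    rw [← hM, hMeta, Matrix.det_fin_two_of] at this
    linear_combination this
  set m := p ^ (r - 1) * k with hm
  -- the exponent equals p^r * m
  have hu : p ^ (2 * r - 1) * (p - 1) / 2 = N * m := by
    have h1 : p - 1 = 2 * k := by omega
    have h2 : 2 * r - 1 = r + (r - 1) := by omega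
    rw [h1, h2, pow_add]
    have h3 : p ^ r * p ^ (r - 1) * (2 * k) = (N * m) * 2 := by rw [hN, hm]; ring
    rw [h3, Nat.mul_div_cancel _ two_pos]
  -- a^(2m) = 1 via totient
  have haunit : IsUnit a := IsUnit.of_mul_eq_one d hdet
  have htotval : Nat.totient N = 2 * m := by
    rw [hN, Nat.totient_prime_pow hp hr, hm]
    have : p - 1 = 2 * k := by omega
    rw [this]; ring
  have htot : a ^ (2 * m) = 1 := by
    obtain ⟨au, hau⟩ := haunit
    have := ZMod.pow_totient au
    rw [htotval] at this
    calc a ^ (2 * m) = ((au ^ (2 * m) : (ZMod N)ˣ) : ZMod N) := by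
          rw [Units.val_pow_eq_pow_val, hau]
      _ = 1 := by rw [this, Units.val_one]
  set ε := a ^ m with hε
  have hε2 : ε ^ 2 = 1 := by rw [hε, ← pow_mul, mul_comm m 2, htot]
  have hdm : d ^ m = ε := by
    have h1 : a ^ m * d ^ m = 1 := by rw [← mul_pow, hdet, one_pow]
    calc d ^ m = (ε * ε) * d ^ m := by rw [← sq, hε2, one_mul]
      _ = ε * (a ^ m * d ^ m) := by rw [hε]; ring
      _ = ε := by rw [h1, mul_one]
  obtain ⟨c, hcpow⟩ := aux_tri_pow a b d m
  have h3 : ε * (ε * c) = c := by linear_combination c * hε2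
  have hsc : ε • (!![1, ε * c; 0, 1] : Matrix (Fin 2) (Fin 2) (ZMod N)) = !![ε, c; 0, ε] := by
    ext i j
    fin_cases i <;> fin_cases j <;> simp [smul_eq_mul, h3]
  have hMm : M ^ m = ε • !![1, ε * c; 0, 1] := by
    rw [hMeta, hcpow, hdm, ← hε, hsc]
  obtain ⟨t, ht⟩ := (hodd.pow : Odd N)
  have hεN : ε ^ N = ε := by
    calc ε ^ N = ε ^ (2 * t + 1) := by rw [← ht]
      _ = ε := by rw [pow_succ, pow_mul, hε2, one_pow, one_mul]
  have hMu : M ^ (p ^ (2 * r - 1) * (p - 1) / 2) = ε • 1 := by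
    rw [hu, mul_comm, pow_mul, hMm, smul_pow, aux_unipotent_pow, hεN,
      ZMod.natCast_self, zero_mul]
    congr 1
    exact (Matrix.one_fin_two).symm
  rcases aux_sqrt_one p hp hodd r hr ε hε2 with h | h
  · left
    rw [map_pow]
    apply Subtype.ext
    rw [Matrix.SpecialLinearGroup.coe_pow, Matrix.SpecialLinearGroup.coe_one, ← hB, ← hM,
      hMu, h, one_smul]
  · right
    rw [map_pow]
    apply Subtype.ext
    rw [Matrix.SpecialLinearGroup.coe_pow, Matrix.SpecialLinearGroup.coe_neg,
      Matrix.SpecialLinearGroup.coe_one, ← hB, ← hM, hMu, h, neg_smul, one_smul]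
end

section
/- For N even, the map Γ(N) → M₂(𝔽₂) sending A = I + N·B + 2N·C (with B ∈ M₂(𝔽₂), i.e., B the mod-2 reduction of (A−I)/N, and C integral) to B is a group homomorphism with kernel Γ(2N), and its image is exactly the set of trace-zero matrices in M₂(𝔽₂); hence Γ(N)/Γ(2N) ≅ (ℤ/2)³. -/
open Matrix CongruenceSubgroup
open scoped MatrixGroups

/-- For A ∈ Γ(N), the mod-2 reduction of (A - I)/N. -/
def phi (N : ℕ) (A : SL(2, ℤ)) : Matrix (Fin 2) (Fin 2) (ZMod 2) :=
  Matrix.of fun i j =>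
    ((((A : Matrix (Fin 2) (Fin 2) ℤ) i j - (1 : Matrix (Fin 2) (Fin 2) ℤ) i j) / (N : ℤ) :
      ℤ) : ZMod 2)

instance gammaComapNormal (N : ℕ) :
    (Subgroup.comap (Gamma N).subtype (Gamma (2 * N))).Normal :=
  (Gamma_normal (2 * N)).comap _

lemma intcast_eq_one_iff (N : ℕ) (x : ℤ) : ((x : ZMod N) = 1) ↔ (N:ℤ) ∣ (x - 1) := by
  rw [← ZMod.intCast_zmod_eq_zero_iff_dvd]; push_cast; rw [sub_eq_zero]

lemma intcast_eq_zero_iff (N : ℕ) (x : ℤ) : ((x : ZMod N) = 0) ↔ (N:ℤ) ∣ x :=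
  ZMod.intCast_zmod_eq_zero_iff_dvd x N

lemma gamma_iff_dvd (N : ℕ) (A : SL(2,ℤ)) : A ∈ Gamma N ↔ ∀ i j,
    (N:ℤ) ∣ ((A : Matrix (Fin 2) (Fin 2) ℤ) i j - (1 : Matrix (Fin 2) (Fin 2) ℤ) i j) := by
  rw [Gamma_mem]
  constructor
  · rintro ⟨h1, h2, h3, h4⟩ i j
    fin_cases i <;> fin_cases j <;>
      simp only [Matrix.one_apply] <;>
      simp_all [intcast_eq_one_iff, intcast_eq_zero_iff]
  · intro h
    have h1 := h 0 0; have h2 := h 0 1; have h3 := h 1 0; have h4 := h 1 1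
    simp only [Matrix.one_apply] at *
    simp_all [intcast_eq_one_iff, intcast_eq_zero_iff]

lemma phi_mul (N : ℕ) (hN : Even N) (hpos : 0 < N) (A B : SL(2,ℤ))
    (hA : A ∈ Gamma N) (hB : B ∈ Gamma N) :
    phi N (A * B) = phi N A + phi N B := by
  rw [gamma_iff_dvd] at hA hB
  have hN0 : (N:ℤ) ≠ 0 := by exact_mod_cast hpos.ne'
  have h2 : ((N:ℤ) : ZMod 2) = 0 := by
    rw [intcast_eq_zero_iff]; exact_mod_cast hN.two_dvd
  set qa : Fin 2 → Fin 2 → ℤ := fun i j =>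
    ((A : Matrix (Fin 2) (Fin 2) ℤ) i j - (1 : Matrix (Fin 2) (Fin 2) ℤ) i j) / N with hqa
  set qb : Fin 2 → Fin 2 → ℤ := fun i j =>
    ((B : Matrix (Fin 2) (Fin 2) ℤ) i j - (1 : Matrix (Fin 2) (Fin 2) ℤ) i j) / N with hqb
  have ea : ∀ i j, (A : Matrix (Fin 2) (Fin 2) ℤ) i j
      = (1 : Matrix (Fin 2) (Fin 2) ℤ) i j + N * qa i j := by
    intro i j
    have := Int.mul_ediv_cancel' (hA i j)
    simp only [hqa]
    omega
  have eb : ∀ i j, (B : Matrix (Fin 2) (Fin 2) ℤ) i j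
      = (1 : Matrix (Fin 2) (Fin 2) ℤ) i j + N * qb i j := by
    intro i j
    have := Int.mul_ediv_cancel' (hB i j)
    simp only [hqb]
    omega
  ext i j
  simp only [phi, Matrix.of_apply, Matrix.add_apply]
  have key : ((A * B : SL(2,ℤ)) : Matrix (Fin 2) (Fin 2) ℤ) i j - (1 : Matrix (Fin 2) (Fin 2) ℤ) i j
      = (N:ℤ) * (qa i j + qb i j + N * (qa i 0 * qb 0 j + qa i 1 * qb 1 j)) := by
    have hprod : ((A * B : SL(2,ℤ)) : Matrix (Fin 2) (Fin 2) ℤ) i j =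
        (A : Matrix (Fin 2) (Fin 2) ℤ) i 0 * (B : Matrix (Fin 2) (Fin 2) ℤ) 0 j +
        (A : Matrix (Fin 2) (Fin 2) ℤ) i 1 * (B : Matrix (Fin 2) (Fin 2) ℤ) 1 j := by
      simp [Matrix.mul_apply, Fin.sum_univ_two]
    rw [hprod, ea i 0, ea i 1, eb 0 j, eb 1 j]
    fin_cases i <;> fin_cases j <;> simp [Matrix.one_apply] <;> ring
  rw [key, Int.mul_ediv_cancel_left _ hN0]
  push_cast
  have h2' : ((N:ℕ) : ZMod 2) = 0 := by
    rw [ZMod.natCast_eq_zero_iff]; exact hN.two_dvd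
  simp only [hqa, hqb] at *
  rw [h2']
  ring

lemma phi_eq_zero_iff (N : ℕ) (hpos : 0 < N) (A : SL(2,ℤ)) (hA : A ∈ Gamma N) :
    phi N A = 0 ↔ A ∈ Gamma (2 * N) := by
  rw [gamma_iff_dvd] at hA
  rw [gamma_iff_dvd]
  have hN0 : (N:ℤ) ≠ 0 := by exact_mod_cast hpos.ne'
  constructor
  · intro h i j
    obtain ⟨q, hq⟩ := hA i j
    have h2 : ((((A : Matrix (Fin 2) (Fin 2) ℤ) i j - (1 : Matrix (Fin 2) (Fin 2) ℤ) i j) / N :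
        ℤ) : ZMod 2) = 0 := by
      have := congrFun (congrFun h i) j
      simpa [phi] using this
    rw [intcast_eq_zero_iff] at h2
    obtain ⟨r, hr⟩ := h2
    rw [hq, Int.mul_ediv_cancel_left _ hN0] at hr
    exact ⟨r, by rw [hq, hr]; push_cast; ring⟩
  · intro h
    ext i j
    obtain ⟨r, hr⟩ := h i j
    simp only [phi, Matrix.of_apply, Matrix.zero_apply]
    have : ((A : Matrix (Fin 2) (Fin 2) ℤ) i j - (1 : Matrix (Fin 2) (Fin 2) ℤ) i j) / N
        = 2 * r := by
      rw [hr]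
      push_cast
      rw [show (2 : ℤ) * N * r = N * (2 * r) by ring, Int.mul_ediv_cancel_left _ hN0]
    rw [this, intcast_eq_zero_iff]
    exact ⟨r, rfl⟩

lemma phi_trace (N : ℕ) (hN : Even N) (hpos : 0 < N) (A : SL(2,ℤ)) (hA : A ∈ Gamma N) :
    Matrix.trace (phi N A) = 0 := by
  rw [gamma_iff_dvd] at hA
  have hN0 : (N:ℤ) ≠ 0 := by exact_mod_cast hpos.ne'
  obtain ⟨q00, h00⟩ := hA 0 0
  obtain ⟨q01, h01⟩ := hA 0 1
  obtain ⟨q10, h10⟩ := hA 1 0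
  obtain ⟨q11, h11⟩ := hA 1 1
  have hdet : (A : Matrix (Fin 2) (Fin 2) ℤ) 0 0 * (A : Matrix (Fin 2) (Fin 2) ℤ) 1 1 -
      (A : Matrix (Fin 2) (Fin 2) ℤ) 0 1 * (A : Matrix (Fin 2) (Fin 2) ℤ) 1 0 = 1 := by
    have := A.property
    rw [Matrix.det_fin_two] at this
    exact this
  simp only [Matrix.one_apply_eq, Matrix.one_apply_ne (by decide : (0 : Fin 2) ≠ 1),
    Matrix.one_apply_ne (by decide : (1 : Fin 2) ≠ 0)] at h00 h01 h10 h11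
  have key : q00 + q11 = N * (q01 * q10 - q00 * q11) := by
    have ha : (A : Matrix (Fin 2) (Fin 2) ℤ) 0 0 = 1 + N * q00 := by omega
    have hb : (A : Matrix (Fin 2) (Fin 2) ℤ) 1 1 = 1 + N * q11 := by omega
    have hc : (A : Matrix (Fin 2) (Fin 2) ℤ) 0 1 = N * q01 := by omega
    have hd : (A : Matrix (Fin 2) (Fin 2) ℤ) 1 0 = N * q10 := by omega
    rw [ha, hb, hc, hd] at hdet
    have : (N:ℤ) * (q00 + q11 - N * (q01 * q10 - q00 * q11)) = 0 := by ring_nf; nlinarith [hdet]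
    have := mul_eq_zero.mp this
    omega
  have h2 : ((N:ℤ) : ZMod 2) = 0 := by
    rw [intcast_eq_zero_iff]; exact_mod_cast hN.two_dvd
  rw [Matrix.trace_fin_two]
  simp only [phi, Matrix.of_apply, Matrix.one_apply_eq]
  rw [h00, h11]
  rw [Int.mul_ediv_cancel_left _ hN0, Int.mul_ediv_cancel_left _ hN0]
  have : ((q00 + q11 : ℤ) : ZMod 2) = (((N : ℤ) * (q01 * q10 - q00 * q11) : ℤ) : ZMod 2) := by
    exact_mod_cast congrArg (Int.cast : ℤ → ZMod 2) key
  push_cast at this ⊢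
  rw [this]
  have h2'' : ((N:ℕ) : ZMod 2) = 0 := by
    rw [ZMod.natCast_eq_zero_iff]; exact hN.two_dvd
  rw [h2'']
  ring

def Umat (N : ℕ) : SL(2,ℤ) := ⟨!![1, (N:ℤ); 0, 1], by simp [Matrix.det_fin_two_of]⟩
def Lmat (N : ℕ) : SL(2,ℤ) := ⟨!![1, 0; (N:ℤ), 1], by simp [Matrix.det_fin_two_of]⟩
def Wmat (N : ℕ) : SL(2,ℤ) :=
  ⟨!![1 + (N:ℤ), (N:ℤ); -(N:ℤ), 1 - (N:ℤ)], by simp [Matrix.det_fin_two_of]; ring⟩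

lemma Umat_mem (N : ℕ) : Umat N ∈ Gamma N := by
  rw [gamma_iff_dvd]
  intro i j
  fin_cases i <;> fin_cases j <;> simp [Umat, Matrix.one_apply]

lemma Lmat_mem (N : ℕ) : Lmat N ∈ Gamma N := by
  rw [gamma_iff_dvd]
  intro i j
  fin_cases i <;> fin_cases j <;> simp [Lmat, Matrix.one_apply]

lemma Wmat_mem (N : ℕ) : Wmat N ∈ Gamma N := by
  rw [gamma_iff_dvd]
  intro i j
  fin_cases i <;> fin_cases j <;> simp [Wmat, Matrix.one_apply]

lemma phi_Umat (N : ℕ) (hpos : 0 < N) : phi N (Umat N) = !![0, 1; 0, 0] := by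
  have hN0 : (N:ℤ) ≠ 0 := by exact_mod_cast hpos.ne'
  ext i j
  fin_cases i <;> fin_cases j <;>
    simp [phi, Umat, Matrix.one_apply, Int.ediv_self hN0]

lemma phi_Lmat (N : ℕ) (hpos : 0 < N) : phi N (Lmat N) = !![0, 0; 1, 0] := by
  have hN0 : (N:ℤ) ≠ 0 := by exact_mod_cast hpos.ne'
  ext i j
  fin_cases i <;> fin_cases j <;>
    simp [phi, Lmat, Matrix.one_apply, Int.ediv_self hN0]

lemma phi_Wmat (N : ℕ) (hpos : 0 < N) : phi N (Wmat N) = !![1, 1; 1, 1] := by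
  have hN0 : (N:ℤ) ≠ 0 := by exact_mod_cast hpos.ne'
  have hneg : (-(N:ℤ)) / N = -1 := by
    rw [show (-(N:ℤ)) = (N:ℤ) * (-1) by ring, Int.mul_ediv_cancel_left _ hN0]
  ext i j
  fin_cases i <;> fin_cases j <;>
    simp [phi, Wmat, Matrix.one_apply, Int.ediv_self hN0, hneg, add_sub_cancel_left,
      sub_sub_cancel_left] <;> decide

lemma phi_one (N : ℕ) : phi N 1 = 0 := by
  ext i j
  simp [phi]

lemma exists_phi_eq (N : ℕ) (hN : Even N) (hpos : 0 < N) (x y z : ZMod 2) :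
    ∃ A ∈ Gamma N, phi N A = !![x, y; z, x] := by
  have hU := Umat_mem N; have hL := Lmat_mem N; have hW := Wmat_mem N
  have pU := phi_Umat N hpos; have pL := phi_Lmat N hpos; have pW := phi_Wmat N hpos
  fin_cases x <;> fin_cases y <;> fin_cases z
  · exact ⟨1, Subgroup.one_mem _, by rw [phi_one]; decide⟩
  · exact ⟨Lmat N, hL, by rw [pL]; decide⟩
  · exact ⟨Umat N, hU, by rw [pU]; decide⟩
  · exact ⟨Umat N * Lmat N, Subgroup.mul_mem _ hU hL,
      by rw [phi_mul N hN hpos _ _ hU hL, pU, pL]; decide⟩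
  · exact ⟨Wmat N * (Umat N * Lmat N),
      Subgroup.mul_mem _ hW (Subgroup.mul_mem _ hU hL),
      by rw [phi_mul N hN hpos _ _ hW (Subgroup.mul_mem _ hU hL),
        phi_mul N hN hpos _ _ hU hL, pW, pU, pL]; decide⟩
  · exact ⟨Wmat N * Umat N, Subgroup.mul_mem _ hW hU,
      by rw [phi_mul N hN hpos _ _ hW hU, pW, pU]; decide⟩
  · exact ⟨Wmat N * Lmat N, Subgroup.mul_mem _ hW hL,
      by rw [phi_mul N hN hpos _ _ hW hL, pW, pL]; decide⟩
  · exact ⟨Wmat N, hW, by rw [pW]; decide⟩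


/-- For N even, the map A = I + N·B + 2N·C ↦ B is a homomorphism Γ(N) → M₂(𝔽₂)
with kernel Γ(2N) and image exactly the trace-zero matrices;
hence Γ(N)/Γ(2N) ≅ (ℤ/2)³. -/
theorem gamma_mod_two_gamma_structure (N : ℕ) (hN : Even N) (hpos : 0 < N) :
    (∀ A B : SL(2, ℤ), A ∈ Gamma N → B ∈ Gamma N → phi N (A * B) = phi N A + phi N B) ∧
    (∀ A : SL(2, ℤ), A ∈ Gamma N → (phi N A = 0 ↔ A ∈ Gamma (2 * N))) ∧
    (∀ B : Matrix (Fin 2) (Fin 2) (ZMod 2),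
      (∃ A ∈ Gamma N, phi N A = B) ↔ Matrix.trace B = 0) ∧
    Nonempty ((↥(Gamma N) ⧸ Subgroup.comap (Gamma N).subtype (Gamma (2 * N))) ≃*
      Multiplicative (ZMod 2 × ZMod 2 × ZMod 2)) := by
  refine ⟨fun A B hA hB => phi_mul N hN hpos A B hA hB,
    fun A hA => phi_eq_zero_iff N hpos A hA, ?_, ?_⟩
  · intro B
    constructor
    · rintro ⟨A, hA, rfl⟩
      exact phi_trace N hN hpos A hA
    · intro htr
      rw [Matrix.trace_fin_two] at htr
      have h11 : B 1 1 = B 0 0 := by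
        have := eq_neg_of_add_eq_zero_right htr
        rw [this, CharTwo.neg_eq]
      obtain ⟨A, hA, hphi⟩ := exists_phi_eq N hN hpos (B 0 0) (B 0 1) (B 1 0)
      refine ⟨A, hA, ?_⟩
      rw [hphi]
      ext i j
      fin_cases i <;> fin_cases j <;> simp [h11]
  · let Φ : ↥(Gamma N) →* Multiplicative (ZMod 2 × ZMod 2 × ZMod 2) :=
      MonoidHom.mk' (fun A => Multiplicative.ofAdd
          (phi N ↑A 0 0, phi N ↑A 0 1, phi N ↑A 1 0))
        (fun A B => by
          have h := phi_mul N hN hpos ↑A ↑B A.2 B.2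
          simp only [Subgroup.coe_mul]
          rw [h]
          rfl)
    have hsurj : Function.Surjective Φ := by
      rintro ⟨x, y, z⟩
      obtain ⟨A, hA, hphi⟩ := exists_phi_eq N hN hpos x y z
      refine ⟨⟨A, hA⟩, ?_⟩
      simp only [Φ, MonoidHom.mk'_apply, hphi]
      rfl
    have hker : Φ.ker = Subgroup.comap (Gamma N).subtype (Gamma (2 * N)) := by
      ext A
      simp only [MonoidHom.mem_ker, Subgroup.mem_comap, Subgroup.coe_subtype]
      rw [← phi_eq_zero_iff N hpos ↑A A.2]
      constructor
      · intro h
        have h3 : phi N ↑A 0 0 = 0 ∧ phi N ↑A 0 1 = 0 ∧ phi N ↑A 1 0 = 0 := by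
          simpa [Φ, Prod.ext_iff] using h
        have h4 : phi N ↑A 1 1 = 0 := by
          have ht := phi_trace N hN hpos ↑A A.2
          rw [Matrix.trace_fin_two, h3.1, zero_add] at ht
          exact ht
        ext i j
        fin_cases i <;> fin_cases j <;> simp [h3.1, h3.2.1, h3.2.2, h4]
      · intro h
        simp [Φ, h]
    exact ⟨(QuotientGroup.quotientMulEquivOfEq hker.symm).trans
      (QuotientGroup.quotientKerEquivOfSurjective Φ hsurj)⟩
end

section
/- Suppose N > 2 is odd, Γ ≤ SL₂(ℤ) is a lift of the projective image of Γ(N) with Γ(2N) ≤ Γ and -I ∉ Γ. If A ∈ Γ reduces mod 2 to an element of odd order in SL₂(𝔽₂), then A ∈ Γ(N) (i.e., its sign relative to the canonical lift is +1). -/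
open Matrix CongruenceSubgroup
open scoped MatrixGroups

lemma crt_zero (N : ℕ) (hodd : Odd N) (x : ℤ) (h2 : (x : ZMod 2) = 0)
    (hN : (x : ZMod N) = 0) : (x : ZMod (2 * N)) = 0 := by
  rw [ZMod.intCast_zmod_eq_zero_iff_dvd] at h2 hN ⊢
  have hc : IsCoprime (2 : ℤ) (N : ℤ) := by
    rw [Int.isCoprime_iff_gcd_eq_one]
    have h : Nat.Coprime 2 N := hodd.coprime_two_left
    simpa [Int.gcd] using h
  push_cast
  exact hc.mul_dvd h2 hN

lemma crt_one (N : ℕ) (hodd : Odd N) (x : ℤ) (h2 : (x : ZMod 2) = 1)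
    (hN : (x : ZMod N) = 1) : (x : ZMod (2 * N)) = 1 := by
  have h2' : ((x - 1 : ℤ) : ZMod 2) = 0 := by push_cast [h2]; ring
  have hN' : ((x - 1 : ℤ) : ZMod N) = 0 := by push_cast [hN]; ring
  have := crt_zero N hodd (x - 1) h2' hN'
  push_cast at this
  linear_combination this

/-- Let N > 2 be odd and Γ a lift of the projective image of Γ(N) with
Γ(2N) ≤ Γ and -I ∉ Γ. If A ∈ Γ reduces mod 2 to an element of odd order in
SL₂(𝔽₂), then A ∈ Γ(N) (its sign relative to the canonical lift is +1). -/
theorem sign_one_of_odd_order_mod_two (N : ℕ) (hN : 2 < N) (hodd : Odd N)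
    (Γ : Subgroup SL(2, ℤ))
    (hlift : Subgroup.map proj Γ = Subgroup.map proj (Gamma N))
    (hsub : Gamma (2 * N) ≤ Γ) (hneg : (-1 : SL(2, ℤ)) ∉ Γ)
    (A : SL(2, ℤ)) (hA : A ∈ Γ) (hord : Odd (orderOf (redMod 2 A))) :
    A ∈ Gamma N := by
  have hAproj : proj A ∈ Subgroup.map proj (Gamma N) :=
    hlift ▸ Subgroup.mem_map_of_mem proj hA
  obtain ⟨B, hB, hBA⟩ := hAproj
  rw [proj, QuotientGroup.mk'_eq_mk'] at hBA
  obtain ⟨z, hz, hzeq⟩ := hBA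
  rw [Subgroup.mem_zpowers_iff] at hz
  obtain ⟨m, hm⟩ := hz
  have hsq : (-1 : SL(2, ℤ)) ^ (2 : ℤ) = 1 := by
    rw [zpow_two, neg_mul_neg, one_mul]
  have hz2 : z = 1 ∨ z = -1 := by
    rcases Int.even_or_odd m with ⟨j, rfl⟩ | ⟨j, rfl⟩
    · left
      rw [← hm, ← two_mul, _root_.zpow_mul, hsq, _root_.one_zpow]
    · right
      rw [← hm, _root_.zpow_add, _root_.zpow_mul, hsq, _root_.one_zpow, one_mul, zpow_one]
  rcases hz2 with rfl | rfl
  · rw [mul_one] at hzeq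
    exact hzeq ▸ hB
  · -- B * (-1) = A, i.e. B = -A
    rw [mul_neg_one] at hzeq
    have hBnA : B = -A := by rw [← hzeq, neg_neg]
    exfalso
    set k := orderOf (redMod 2 A) with hk
    have hAk2 : A ^ k ∈ Gamma 2 := by
      have : redMod 2 (A ^ k) = 1 := by rw [map_pow]; exact pow_orderOf_eq_one _
      exact Gamma_mem'.2 this
    have hBkN : B ^ k ∈ Gamma N := Subgroup.pow_mem _ hB k
    have hBkA : B ^ k = -(A ^ k) := by rw [hBnA, hord.neg_pow]
    -- entries of A^k mod 2
    rw [Gamma_mem] at hAk2 hBkN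
    have hBk2N : B ^ k ∈ Gamma (2 * N) := by
      rw [Gamma_mem]
      have e : ∀ i j : Fin 2, ((B ^ k : SL(2, ℤ)) i j : ℤ) = -((A ^ k : SL(2, ℤ)) i j : ℤ) := by
        intro i j
        rw [hBkA]
        simp [Matrix.SpecialLinearGroup.coe_neg]
      have neg2 : ∀ x : ZMod 2, -x = x := by decide
      refine ⟨?_, ?_, ?_, ?_⟩
      · exact crt_one N hodd _ (by rw [e]; push_cast; rw [neg2]; exact hAk2.1) hBkN.1
      · exact crt_zero N hodd _ (by rw [e]; push_cast; rw [neg2]; exact hAk2.2.1) hBkN.2.1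
      · exact crt_zero N hodd _ (by rw [e]; push_cast; rw [neg2]; exact hAk2.2.2.1) hBkN.2.2.1
      · exact crt_one N hodd _ (by rw [e]; push_cast; rw [neg2]; exact hAk2.2.2.2) hBkN.2.2.2
    have hmem : (-1 : SL(2, ℤ)) ∈ Γ := by
      have h1 : B ^ k ∈ Γ := hsub hBk2N
      have h2 : ((A ^ k)⁻¹ : SL(2, ℤ)) ∈ Γ := Γ.inv_mem (Γ.pow_mem hA k)
      have := Γ.mul_mem h1 h2
      rwa [hBkA, ← neg_one_mul, mul_assoc, mul_inv_cancel, mul_one] at this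
    exact hneg hmem
end
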